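/- Let X be an n-dimensional real normed space and Y ⊆ X a k-dimensional subspace with 1 ≤ k ≤ n−1. If x_0 ∈ X \ Y and there exists a minimal I-set for Y with respect to x_0 of cardinality l, then the affine dimension of the set of best approximations P_Y(x_0) is at most k − l + 1. -/

import Mathlib

open Metric Module

noncomputable section

variable {X : Type*} [NormedAddCommGroup X] [NormedSpace ℝ X]

/-- Affine dimension of a subset of a real module: the dimension of (the direction of)
its affine hull. -/
def adim {M : Type*} [AddCommGroup M] [Module ℝ M] (S : Set M) : ℕ :=
  finrank ℝ (affineSpan ℝ S).direction

def IsISet (Y : Submodule ℝ X) (x₀ : X) {ι : Type*} [Fintype ι]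
    (f : ι → (X →L[ℝ] ℝ)) : Prop :=
  (∀ i, f i ∈ Set.extremePoints ℝ (closedBall (0 : X →L[ℝ] ℝ) 1)) ∧
  ∃ y₀ ∈ Y, ‖x₀ - y₀‖ = Metric.infDist x₀ (Y : Set X) ∧
    (∀ i, f i (x₀ - y₀) = ‖x₀ - y₀‖) ∧
    ∃ α : ι → ℝ, (∀ i, 0 < α i) ∧ ∑ i, α i = 1 ∧ ∀ y ∈ Y, ∑ i, α i * f i y = 0

def IsMinimalISet (Y : Submodule ℝ X) (x₀ : X) {l : ℕ} (f : Fin l → (X →L[ℝ] ℝ)) : Prop :=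
  IsISet Y x₀ f ∧
    ∀ s : Finset (Fin l), s ≠ Finset.univ → ¬ IsISet Y x₀ (fun i : {i // i ∈ s} => f i)

/-- The linear map sending a coefficient vector to the corresponding linear combination
of a finite family of functionals. -/
def comboMap {l : ℕ} {V : Type*} [AddCommGroup V] [Module ℝ V]
    (g : Fin l → (V →ₗ[ℝ] ℝ)) : (Fin l → ℝ) →ₗ[ℝ] (V →ₗ[ℝ] ℝ) where
  toFun β := ∑ i, β i • g i
  map_add' β₁ β₂ := by
    simp [add_smul, Finset.sum_add_distrib]
  map_smul' c β := by
    simp [smul_smul, Finset.smul_sum]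

/-- If there is a minimal `I`-set of cardinality `l` for the `k`-dimensional subspace
`Y` with respect to `x₀ ∉ Y`, then the affine dimension of the set `P_Y(x₀)` of best
approximations to `x₀` from `Y` is at most `k - l + 1`. -/
theorem adim_bestApprox_le [FiniteDimensional ℝ X] {n k : ℕ} (hn : finrank ℝ X = n)
    (Y : Submodule ℝ X) (hk : finrank ℝ Y = k) (hk1 : 1 ≤ k) (hkn : k ≤ n - 1)
    (x₀ : X) (hx₀ : x₀ ∉ Y)
    {l : ℕ} (f : Fin l → (X →L[ℝ] ℝ)) (hf : Function.Injective f)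
    (hmin : IsMinimalISet Y x₀ f) :
    adim {y : X | y ∈ Y ∧ ‖x₀ - y‖ = Metric.infDist x₀ (Y : Set X)} + l ≤ k + 1 := by
  classical
  obtain ⟨⟨hext, y₀, hy₀Y, hy₀d, hfd, α, hαpos, hαsum, hαvan⟩, hminimal⟩ := hmin
  set d := Metric.infDist x₀ (Y : Set X) with hd
  set P : Set X := {y : X | y ∈ Y ∧ ‖x₀ - y‖ = d} with hP
  have hl : l ≠ 0 := by
    rintro rfl
    simp at hαsum
  -- norms of the functionals are at most 1
  have hf1 : ∀ i, ‖f i‖ ≤ 1 := by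
    intro i
    have := (hext i).1
    rwa [mem_closedBall_zero_iff] at this
  -- key : the functionals take the value d at x₀ - y for every best approximation y
  have key : ∀ y ∈ P, ∀ i, f i (x₀ - y) = d := by
    intro y hy i
    have h1 : ∑ j, α j * f j (x₀ - y) = d := by
      have e : ∀ j, f j (x₀ - y) = f j (x₀ - y₀) + f j (y₀ - y) := by
        intro j
        rw [← map_add]
        congr 1
        abel
      calc ∑ j, α j * f j (x₀ - y)
          = ∑ j, (α j * f j (x₀ - y₀) + α j * f j (y₀ - y)) := by
            simp only [e, mul_add]
        _ = ∑ j, α j * f j (x₀ - y₀) + ∑ j, α j * f j (y₀ - y) :=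
            Finset.sum_add_distrib
        _ = d := by
            rw [hαvan (y₀ - y) (Y.sub_mem hy₀Y hy.1), add_zero]
            simp only [hfd, hy₀d]
            rw [← Finset.sum_mul, hαsum, one_mul]
    have hle : ∀ j ∈ Finset.univ, α j * f j (x₀ - y) ≤ α j * d := by
      intro j _
      refine mul_le_mul_of_nonneg_left ?_ (hαpos j).le
      calc f j (x₀ - y) ≤ ‖f j (x₀ - y)‖ := le_abs_self _
        _ ≤ ‖f j‖ * ‖x₀ - y‖ := (f j).le_opNorm _
        _ ≤ 1 * d := by
            apply mul_le_mul (hf1 j) (le_of_eq hy.2) (norm_nonneg _) zero_le_one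
        _ = d := one_mul d
    have hsum_d : ∑ j, α j * d = d := by rw [← Finset.sum_mul, hαsum, one_mul]
    have heq := (Finset.sum_eq_sum_iff_of_le hle).mp (by rw [h1, hsum_d])
    have := heq i (Finset.mem_univ i)
    exact mul_left_cancel₀ (hαpos i).ne' this
  -- hence differences of best approximations are killed by each functional
  have key2 : ∀ y ∈ P, ∀ y' ∈ P, ∀ i, f i (y - y') = 0 := by
    intro y hy y' hy' i
    have : y - y' = (x₀ - y') - (x₀ - y) := by abel
    rw [this, map_sub, key y' hy' i, key y hy i, sub_self]
  -- the restricted functionals on Y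
  set g : Fin l → (↥Y →ₗ[ℝ] ℝ) := fun i => LinearMap.domRestrict ((f i) : X →ₗ[ℝ] ℝ) Y
    with hg
  set S := comboMap g with hS
  set E : ↥Y →ₗ[ℝ] (Fin l → ℝ) := LinearMap.pi g with hE
  have memker : ∀ β : Fin l → ℝ,
      β ∈ LinearMap.ker S ↔ ∀ y ∈ Y, ∑ i, β i * f i y = 0 := by
    intro β
    rw [LinearMap.mem_ker]
    constructor
    · intro h y hy
      have := LinearMap.congr_fun h ⟨y, hy⟩
      simpa [hS, comboMap, hg, LinearMap.sum_apply] using this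
    · intro h
      ext z
      simpa [hS, comboMap, hg, LinearMap.sum_apply] using h z z.2
  have hαK : α ∈ LinearMap.ker S := (memker α).mpr hαvan
  have hαne : α ≠ 0 := by
    intro h
    have := hαpos ⟨0, Nat.pos_of_ne_zero hl⟩
    rw [h] at this
    exact lt_irrefl 0 this
  -- minimality: every dependence is a multiple of α
  have hker : ∀ β ∈ LinearMap.ker S, ∃ c : ℝ, β = c • α := by
    intro β hβ
    by_contra hc
    push_neg at hc
    set β' : Fin l → ℝ := β - (∑ i, β i) • α with hβ'def
    have hβ'K : β' ∈ LinearMap.ker S :=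
      Submodule.sub_mem _ hβ (Submodule.smul_mem _ _ hαK)
    have hβ'sum : ∑ i, β' i = 0 := by
      simp [hβ'def, Finset.sum_sub_distrib, ← Finset.mul_sum, hαsum]
    have hβ'ne : β' ≠ 0 := by
      intro h
      apply hc (∑ i, β i)
      have : β - (∑ i, β i) • α = 0 := h
      linear_combination (norm := module) this
    have hneg : ∃ j, β' j < 0 := by
      by_contra h
      push_neg at h
      have hz : ∀ j ∈ Finset.univ, β' j = 0 :=
        (Finset.sum_eq_zero_iff_of_nonneg (fun j _ => h j)).mp hβ'sum
      exact hβ'ne (funext fun j => hz j (Finset.mem_univ j))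
    obtain ⟨j₀, hj₀⟩ := hneg
    set s₀ : Finset (Fin l) := Finset.univ.filter (fun i => β' i < 0) with hs₀
    have hs₀ne : s₀.Nonempty := ⟨j₀, by simp [hs₀, hj₀]⟩
    obtain ⟨j₁, hj₁mem, hj₁min⟩ := s₀.exists_min_image (fun i => α i / (-β' i)) hs₀ne
    have hβ'j₁ : β' j₁ < 0 := by simpa [hs₀] using hj₁mem
    set t : ℝ := α j₁ / (-β' j₁) with ht_def
    have ht : 0 < t := div_pos (hαpos j₁) (neg_pos.mpr hβ'j₁)
    set γ : Fin l → ℝ := fun i => α i + t * β' i with hγdef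
    have hγnn : ∀ i, 0 ≤ γ i := by
      intro i
      by_cases hbi : β' i < 0
      · have h1 : t ≤ α i / (-β' i) := hj₁min i (by simp [hs₀, hbi])
        have h2 : t * (-β' i) ≤ α i := (le_div_iff₀ (neg_pos.mpr hbi)).mp h1
        have h3 : t * β' i = -(t * (-β' i)) := by ring
        simp only [hγdef]
        linarith
      · push_neg at hbi
        have h4 := hαpos i
        have h5 : 0 ≤ t * β' i := mul_nonneg ht.le hbi
        simp only [hγdef]
        linarith
    have hγj₁ : γ j₁ = 0 := by
      have hne : -β' j₁ ≠ 0 := ne_of_gt (neg_pos.mpr hβ'j₁)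
      simp only [hγdef, ht_def]
      field_simp
      rw [div_self (ne_of_lt hβ'j₁), add_neg_cancel, mul_zero]
    have hγsum : ∑ i, γ i = 1 := by
      simp [hγdef, Finset.sum_add_distrib, ← Finset.mul_sum, hβ'sum, hαsum]
    have hγK : ∀ y ∈ Y, ∑ i, γ i * f i y = 0 := by
      intro y hy
      have h1 := hαvan y hy
      have h2 := (memker β').mp hβ'K y hy
      calc ∑ i, γ i * f i y = ∑ i, (α i * f i y + t * (β' i * f i y)) := by
            apply Finset.sum_congr rfl
            intro i _
            simp only [hγdef]
            ring
        _ = ∑ i, α i * f i y + t * ∑ i, β' i * f i y := by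
            rw [Finset.sum_add_distrib, ← Finset.mul_sum]
        _ = 0 := by rw [h1, h2, mul_zero, add_zero]
    set s : Finset (Fin l) := Finset.univ.filter (fun i => γ i ≠ 0) with hs
    have hγzero : ∀ i, i ∉ s → γ i = 0 := by
      intro i hi
      by_contra h
      exact hi (by simp [hs, h])
    have hsne : s ≠ Finset.univ := by
      intro h
      have : j₁ ∈ s := h ▸ Finset.mem_univ j₁
      rw [hs] at this
      simp only [Finset.mem_filter] at this
      exact this.2 hγj₁
    apply hminimal s hsne
    refine ⟨fun i => hext i, y₀, hy₀Y, hy₀d, fun i => hfd i, fun i => γ i, ?_, ?_, ?_⟩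
    · intro i
      have h : γ i.1 ≠ 0 := (Finset.mem_filter.mp i.2).2
      exact lt_of_le_of_ne (hγnn i) (Ne.symm h)
    · rw [Finset.sum_coe_sort s γ]
      rw [Finset.sum_subset (Finset.subset_univ s) (fun x _ hx => hγzero x hx)]
      exact hγsum
    · intro y hy
      rw [Finset.sum_coe_sort s (fun i => γ i * f i y)]
      rw [Finset.sum_subset (Finset.subset_univ s)
        (fun x _ hx => by rw [hγzero x hx, zero_mul])]
      exact hγK y hy
  -- rank of S is at least l - 1
  have hkerS : LinearMap.ker S ≤ Submodule.span ℝ {α} := by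
    intro β hβ
    obtain ⟨c, rfl⟩ := hker β hβ
    exact Submodule.smul_mem _ _ (Submodule.mem_span_singleton_self α)
  have hkerS1 : finrank ℝ (LinearMap.ker S) ≤ 1 := by
    calc finrank ℝ (LinearMap.ker S) ≤ finrank ℝ (Submodule.span ℝ {α}) :=
          Submodule.finrank_mono hkerS
      _ = 1 := finrank_span_singleton hαne
  have hrnS := LinearMap.finrank_range_add_finrank_ker S
  rw [show finrank ℝ (Fin l → ℝ) = l by simp] at hrnS
  have hrangeS : l ≤ finrank ℝ (LinearMap.range S) + 1 := by omega
  -- range S ≤ range E.dualMap, so rank E ≥ l - 1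
  have hrange_le : LinearMap.range S ≤ LinearMap.range E.dualMap := by
    rintro - ⟨β, rfl⟩
    refine ⟨∑ i, β i • LinearMap.proj i, ?_⟩
    ext z
    simp [hS, comboMap, hE, LinearMap.dualMap_apply, LinearMap.sum_apply]
  have hrangeE : l ≤ finrank ℝ (LinearMap.range E) + 1 := by
    have h1 : finrank ℝ (LinearMap.range S) ≤ finrank ℝ (LinearMap.range E) :=
      le_of_le_of_eq (Submodule.finrank_mono hrange_le)
        (LinearMap.finrank_range_dualMap_eq_finrank_range E)
    omega
  -- rank-nullity for E
  have hrnE := LinearMap.finrank_range_add_finrank_ker E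
  rw [hk] at hrnE
  -- the direction of the affine span of P lies in (ker E) mapped into X
  have hdir : (affineSpan ℝ P).direction ≤ Submodule.map Y.subtype (LinearMap.ker E) := by
    rw [direction_affineSpan, vectorSpan_def]
    apply Submodule.span_le.mpr
    intro v hv
    rw [Set.mem_vsub] at hv
    obtain ⟨y, hy, y', hy', rfl⟩ := hv
    have hm : E ((⟨y, hy.1⟩ : ↥Y) - ⟨y', hy'.1⟩) = 0 := by
      funext i
      simp only [hE, LinearMap.pi_apply, hg, LinearMap.domRestrict_apply, Pi.zero_apply]
      have : ((⟨y, hy.1⟩ : ↥Y) - ⟨y', hy'.1⟩ : ↥Y) = (⟨y - y', Y.sub_mem hy.1 hy'.1⟩ : ↥Y) :=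
        rfl
      rw [this]
      exact key2 y hy y' hy' i
    exact ⟨(⟨y, hy.1⟩ : ↥Y) - ⟨y', hy'.1⟩, LinearMap.mem_ker.mpr hm, rfl⟩
  have hadim : adim P ≤ finrank ℝ (LinearMap.ker E) := by
    calc adim P ≤ finrank ℝ (Submodule.map Y.subtype (LinearMap.ker E)) :=
          Submodule.finrank_mono hdir
      _ = finrank ℝ (LinearMap.ker E) := Submodule.finrank_map_subtype_eq Y _
  omega
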